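/- Let p be a prime and let d be an integer with 0 ≤ d ≤ p−1. Then 2 · ∑_{k=0}^{p−1} k · C_{k+d} ≡ (d+1)·(1 − (p/3)) − 2·(p/3)·d − 2·∑_{k=0}^{d} k · C_{d−k} (mod p). -/
import Mathlib

/-- `chi3 a` is the Legendre symbol `(a/3)`: the unique element of `{0, 1, -1}`
congruent to `a` modulo `3`. -/
def chi3 (a : ℤ) : ℤ := if a % 3 = 0 then 0 else if a % 3 = 1 then 1 else -1

open Finset

section NatLemmas


lemma centralBinom_succ_eq (m : ℕ) :
    Nat.centralBinom (m + 1) = (4 * m + 2) * catalan m := by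
  apply Nat.eq_of_mul_eq_mul_left (show 0 < m + 1 by omega)
  calc (m + 1) * Nat.centralBinom (m + 1) = 2 * (2 * m + 1) * Nat.centralBinom m :=
        Nat.succ_mul_centralBinom_succ m
    _ = 2 * (2 * m + 1) * ((m + 1) * catalan m) := by
        rw [succ_mul_catalan_eq_centralBinom]
    _ = (m + 1) * ((4 * m + 2) * catalan m) := by ring

lemma cat_rec (m : ℕ) : (m + 2) * catalan (m + 1) = (4 * m + 2) * catalan m := by
  rw [succ_mul_catalan_eq_centralBinom, centralBinom_succ_eq]

lemma two_cat (m : ℕ) :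
    2 * catalan m + Nat.centralBinom (m + 1) = 4 * Nat.centralBinom m := by
  rw [centralBinom_succ_eq, ← succ_mul_catalan_eq_centralBinom]
  ring

lemma tele {R : Type*} [CommRing R] (d : ℕ) : ∀ n : ℕ,
    ∑ k ∈ range n, (3 * (k : R) + 3 * d + 1) * (catalan (k + d) : R)
      = ((n : R) + d + 1) * (catalan (n + d) : R) - ((d : R) + 1) * (catalan d : R)
  | 0 => by simp
  | (n + 1) => by
    rw [Finset.sum_range_succ, tele d n]
    have h := congrArg (Nat.cast : ℕ → R) (cat_rec (n + d))
    push_cast at h ⊢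
    have hidx : n + 1 + d = n + d + 1 := by ring
    rw [hidx]
    linear_combination -h

lemma fact_mul_centralBinom (k : ℕ) :
    k.factorial * Nat.centralBinom k = 2 ^ k * ∏ j ∈ range k, (2 * j + 1) := by
  induction k with
  | zero => simp [Nat.centralBinom]
  | succ k ih =>
    have h1 : (k + 1) * Nat.centralBinom (k + 1) = 2 * (2 * k + 1) * Nat.centralBinom k :=
      Nat.succ_mul_centralBinom_succ k
    rw [prod_range_succ]
    calc (k + 1).factorial * Nat.centralBinom (k + 1)
        = k.factorial * ((k + 1) * Nat.centralBinom (k + 1)) := by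
          rw [Nat.factorial_succ]; ring
      _ = k.factorial * (2 * (2 * k + 1) * Nat.centralBinom k) := by rw [h1]
      _ = 2 * (2 * k + 1) * (k.factorial * Nat.centralBinom k) := by ring
      _ = 2 * (2 * k + 1) * (2 ^ k * ∏ j ∈ range k, (2 * j + 1)) := by rw [ih]
      _ = 2 ^ (k + 1) * ((∏ j ∈ range k, (2 * j + 1)) * (2 * k + 1)) := by ring

lemma fact_mul_choose {h : ℕ} : ∀ k, k ≤ h →
    2 ^ k * (k.factorial * Nat.choose h k) = ∏ j ∈ range k, (2 * h - 2 * j)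
  | 0, _ => by simp
  | (k + 1), hk => by
    have hk' : k ≤ h := by omega
    have ih := fact_mul_choose k hk'
    have h1 : Nat.choose h (k + 1) * (k + 1) = Nat.choose h k * (h - k) :=
      Nat.choose_succ_right_eq h k
    rw [prod_range_succ, ← ih]
    have h2 : 2 * (h - k) = 2 * h - 2 * k := by omega
    calc 2 ^ (k + 1) * ((k + 1).factorial * Nat.choose h (k + 1))
        = 2 ^ k * k.factorial * (Nat.choose h (k + 1) * (k + 1)) * 2 := by
          rw [Nat.factorial_succ]; ring
      _ = 2 ^ k * k.factorial * (Nat.choose h k * (h - k)) * 2 := by rw [h1]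
      _ = 2 ^ k * (k.factorial * Nat.choose h k) * (2 * (h - k)) := by ring
      _ = 2 ^ k * (k.factorial * Nat.choose h k) * (2 * h - 2 * k) := by rw [h2]

end NatLemmas

section ModP


variable {p : ℕ} [hpf : Fact p.Prime]

lemma Bmid {k : ℕ} (h1 : p < 2 * k) (h2 : k < p) :
    ((Nat.centralBinom k : ℕ) : ZMod p) = 0 := by
  rw [ZMod.natCast_eq_zero_iff]
  have hp := hpf.out
  have hfac : (2 * k).factorial = Nat.centralBinom k * k.factorial * k.factorial := by
    have h0 := Nat.choose_mul_factorial_mul_factorial (show k ≤ 2 * k by omega)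
    rw [show 2 * k - k = k from by omega] at h0
    exact h0.symm
  have hdvd : p ∣ (2 * k).factorial := Nat.dvd_factorial hp.pos (by omega)
  rw [hfac] at hdvd
  have hnf : ¬ p ∣ k.factorial := by
    rw [hp.dvd_factorial]; omega
  rcases (hp.dvd_mul).mp hdvd with h | h
  · rcases (hp.dvd_mul).mp h with h' | h'
    · exact h'
    · exact absurd h' hnf
  · exact absurd h hnf

lemma Bshift {m : ℕ} (hm : m < p) :
    ((Nat.centralBinom (p + m) : ℕ) : ZMod p) =
      if 2 * m < p then 2 * (Nat.centralBinom m : ZMod p) else 0 := by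
  have hlucas := @Choose.choose_modEq_choose_mod_mul_choose_div_nat (2 * (p + m)) (p + m) p _
  have hcast := (ZMod.natCast_eq_natCast_iff _ _ _).mpr hlucas
  have hk1 : (p + m) % p = m := by
    rw [Nat.add_mod_left, Nat.mod_eq_of_lt hm]
  have hk2 : (p + m) / p = 1 := by
    rw [Nat.add_div_left _ hpf.out.pos, Nat.div_eq_of_lt hm]
  rw [show Nat.centralBinom (p + m) = (2*(p+m)).choose (p+m) from rfl, hcast, hk1, hk2]
  by_cases h2m : 2 * m < p
  · have hn1 : 2 * (p + m) % p = 2 * m := by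
      have : 2 * (p + m) = 2 * m + p * 2 := by ring
      rw [this, Nat.add_mul_mod_self_left, Nat.mod_eq_of_lt h2m]
    have hn2 : 2 * (p + m) / p = 2 := by
      have : 2 * (p + m) = 2 * m + p * 2 := by ring
      rw [this, Nat.add_mul_div_left _ _ hpf.out.pos, Nat.div_eq_of_lt h2m]
    rw [if_pos h2m, hn1, hn2]
    have : Nat.choose 2 1 = 2 := by decide
    rw [this, ← Nat.centralBinom]
    push_cast
    ring
  · have hple : p ≤ 2 * m := by omega
    have hlt : 2 * m - p < p := by omega
    have hn1 : 2 * (p + m) % p = 2 * m - p := by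
      have : 2 * (p + m) = (2 * m - p) + p * 3 := by omega
      rw [this, Nat.add_mul_mod_self_left, Nat.mod_eq_of_lt hlt]
    have hn2 : 2 * (p + m) / p = 3 := by
      have : 2 * (p + m) = (2 * m - p) + p * 3 := by omega
      rw [this, Nat.add_mul_div_left _ _ hpf.out.pos, Nat.div_eq_of_lt hlt]
    rw [if_neg h2m, hn1, hn2]
    have hz : Nat.choose (2 * m - p) m = 0 := Nat.choose_eq_zero_of_lt (by omega)
    rw [hz]
    push_cast
    ring
lemma Bsmall (hp2 : p ≠ 2) {k : ℕ} (hk : k ≤ p / 2) :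
    ((Nat.centralBinom k : ℕ) : ZMod p) = (-4) ^ k * (Nat.choose (p / 2) k : ZMod p) := by
  have hp := hpf.out
  have hodd : p % 2 = 1 := hp.eq_two_or_odd.resolve_left hp2
  have hkp : k < p := by
    have := Nat.div_lt_self hp.pos (by norm_num : 1 < 2)
    omega
  have hu : ((2 ^ k * k.factorial : ℕ) : ZMod p) ≠ 0 := by
    rw [Ne, ZMod.natCast_eq_zero_iff]
    intro hdvd
    rcases hp.dvd_mul.mp hdvd with h | h
    · exact hp2 ((Nat.prime_dvd_prime_iff_eq hp Nat.prime_two).mp (hp.dvd_of_dvd_pow h))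
    · rw [hp.dvd_factorial] at h; omega
  apply mul_left_cancel₀ hu
  have e1 : ((k.factorial * Nat.centralBinom k : ℕ) : ZMod p)
      = ((2 ^ k * ∏ j ∈ range k, (2 * j + 1) : ℕ) : ZMod p) := by
    rw [fact_mul_centralBinom]
  have e2 : ((2 ^ k * (k.factorial * Nat.choose (p / 2) k) : ℕ) : ZMod p)
      = ((∏ j ∈ range k, (2 * (p / 2) - 2 * j) : ℕ) : ZMod p) := by
    rw [fact_mul_choose k hk]
  have e3 : ((∏ j ∈ range k, (2 * (p / 2) - 2 * j) : ℕ) : ZMod p)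
      = (-1) ^ k * ∏ j ∈ range k, (2 * (j : ZMod p) + 1) := by
    push_cast
    calc ∏ j ∈ range k, ((2 * (p / 2) - 2 * j : ℕ) : ZMod p)
        = ∏ j ∈ range k, ((-1) * (2 * (j : ZMod p) + 1)) := by
          apply Finset.prod_congr rfl
          intro j hj
          rw [Finset.mem_range] at hj
          have hj' : j < p / 2 := lt_of_lt_of_le hj hk
          have hsub : 2 * (p / 2) - 2 * j = p - (2 * j + 1) := by omega
          rw [hsub, Nat.cast_sub (by omega)]
          push_cast [ZMod.natCast_self]
          ring
      _ = (-1) ^ k * ∏ j ∈ range k, (2 * (j : ZMod p) + 1) := by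
          rw [Finset.prod_mul_distrib, Finset.prod_const, Finset.card_range]
  have hm1 : ((-1 : ZMod p)) ^ k * (-1 : ZMod p) ^ k = 1 := by
    rw [← mul_pow]; norm_num
  have h44 : ((4 : ZMod p)) ^ k = 2 ^ k * 2 ^ k := by
    rw [← mul_pow]; norm_num
  push_cast at e1 e2 e3 ⊢
  rw [show ((-4 : ZMod p)) ^ k = (-1 : ZMod p) ^ k * 4 ^ k from by
    rw [← neg_one_mul, mul_pow]]
  linear_combination (2 : ZMod p) ^ k * e1 - (-1 : ZMod p) ^ k * 4 ^ k * e2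
    - (-1 : ZMod p) ^ k * 4 ^ k * e3
    - 4 ^ k * (∏ j ∈ range k, (2 * (j : ZMod p) + 1)) * hm1
    - (∏ j ∈ range k, (2 * (j : ZMod p) + 1)) * h44
lemma notSq2 : ¬ IsSquare (2 : ZMod 3) := by decide

variable {p : ℕ} [hpf : Fact p.Prime]

lemma legendre_neg_three (hp2 : p ≠ 2) (hp3 : p ≠ 3) :
    legendreSym p (-3) = chi3 (p : ℤ) := by
  haveI : Fact (Nat.Prime 3) := ⟨by norm_num⟩
  have hp := hpf.out
  have hodd : p % 2 = 1 := hp.eq_two_or_odd.resolve_left hp2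
  have leg1 : legendreSym p (-3) = legendreSym p (-1) * legendreSym p 3 := by
    rw [← legendreSym.mul]; norm_num
  have leg2 : legendreSym p (-1) = (-1) ^ (p / 2) := by
    rw [legendreSym.at_neg_one hp2, ZMod.χ₄_eq_neg_one_pow hodd]
  have leg3 : legendreSym p 3 = (-1) ^ (p / 2) * legendreSym 3 p := by
    have := legendreSym.quadratic_reciprocity' (p := 3) (q := p) (by norm_num) hp2
    simpa using this
  have leg4 : legendreSym 3 (p : ℤ) = chi3 (p : ℤ) := by
    have hne : p % 3 ≠ 0 := by
      intro h
      exact hp3 (((Nat.prime_dvd_prime_iff_eq (by norm_num) hp).mp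
        (Nat.dvd_of_mod_eq_zero h)).symm)
    have h12 : p % 3 = 1 ∨ p % 3 = 2 := by omega
    rw [legendreSym.mod]
    rcases h12 with h | h
    · rw [show (p : ℤ) % ((3 : ℕ) : ℤ) = 1 from by push_cast; omega]
      have hv : chi3 (p : ℤ) = 1 := by
        unfold chi3
        rw [show (p : ℤ) % 3 = 1 from by omega]
        norm_num
      rw [hv]
      exact legendreSym.at_one 3
    · rw [show (p : ℤ) % ((3 : ℕ) : ℤ) = 2 from by push_cast; omega]
      have hv : chi3 (p : ℤ) = -1 := by
        unfold chi3
        rw [show (p : ℤ) % 3 = 2 from by omega]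
        norm_num
      rw [hv, legendreSym.eq_neg_one_iff]
      rw [show ((2 : ℤ) : ZMod 3) = (2 : ZMod 3) from by push_cast; rfl]
      exact notSq2
  rw [leg1, leg2, leg3, ← mul_assoc, ← mul_pow]
  norm_num
  exact leg4

lemma neg_three_pow (hp2 : p ≠ 2) (hp3 : p ≠ 3) :
    ((-3 : ZMod p)) ^ (p / 2) = ((chi3 (p : ℤ) : ℤ) : ZMod p) := by
  have h := legendreSym.eq_pow p (-3)
  rw [legendre_neg_three hp2 hp3] at h
  push_cast at h
  exact h.symm
lemma sumB (hp2 : p ≠ 2) (hp3 : p ≠ 3) :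
    ∑ k ∈ range p, ((Nat.centralBinom k : ℕ) : ZMod p) = ((chi3 (p : ℤ) : ℤ) : ZMod p) := by
  have hp := hpf.out
  have hodd : p % 2 = 1 := hp.eq_two_or_odd.resolve_left hp2
  set h := p / 2 with hh
  have hsplit : p = (h + 1) + h := by omega
  rw [show range p = range ((h + 1) + h) from by rw [← hsplit], Finset.sum_range_add]
  have hzero : ∑ i ∈ range h, ((Nat.centralBinom (h + 1 + i) : ℕ) : ZMod p) = 0 := by
    apply Finset.sum_eq_zero
    intro i hi
    rw [Finset.mem_range] at hi
    exact Bmid (by omega) (by omega)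
  rw [hzero, add_zero]
  have hmain : ∑ k ∈ range (h + 1), ((Nat.centralBinom k : ℕ) : ZMod p)
      = ∑ k ∈ range (h + 1), ((-4 : ZMod p)) ^ k * (1 : ZMod p) ^ (h - k) * Nat.choose h k := by
    apply Finset.sum_congr rfl
    intro k hk
    rw [Finset.mem_range] at hk
    rw [Bsmall hp2 (by omega)]
    rw [one_pow]
    ring
  rw [hmain, ← add_pow]
  rw [show ((-4 : ZMod p)) + 1 = -3 from by ring]
  exact neg_three_pow hp2 hp3

lemma twoCatR {p : ℕ} (n : ℕ) :
    2 * (catalan n : ZMod p) = 4 * ((Nat.centralBinom n : ℕ) : ZMod p)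
      - ((Nat.centralBinom (n + 1) : ℕ) : ZMod p) := by
  have h := congrArg (fun x : ℕ => (x : ZMod p)) (two_cat n)
  push_cast at h
  linear_combination h

lemma cshift (hp2 : p ≠ 2) {m : ℕ} (hm : m + 2 ≤ p) :
    2 * (catalan (p + m) : ZMod p) = 4 * (catalan m : ZMod p) := by
  have hp := hpf.out
  have hodd : p % 2 = 1 := hp.eq_two_or_odd.resolve_left hp2
  have h1 := twoCatR (p := p) (p + m)
  have h2 := twoCatR (p := p) m
  have hb1 : ((Nat.centralBinom (p + m) : ℕ) : ZMod p)
      = if 2 * m < p then 2 * ((Nat.centralBinom m : ℕ) : ZMod p) else 0 :=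
    Bshift (by omega)
  have hb2 : ((Nat.centralBinom (p + m + 1) : ℕ) : ZMod p)
      = if 2 * (m + 1) < p then 2 * ((Nat.centralBinom (m + 1) : ℕ) : ZMod p) else 0 := by
    rw [show p + m + 1 = p + (m + 1) from rfl]
    exact Bshift (by omega)
  by_cases hc1 : 2 * m < p
  · by_cases hc2 : 2 * (m + 1) < p
    · rw [if_pos hc1] at hb1
      rw [if_pos hc2] at hb2
      linear_combination h1 - 2 * h2 + 4 * hb1 - hb2
    · rw [if_pos hc1] at hb1
      rw [if_neg hc2] at hb2
      have hbm1 : ((Nat.centralBinom (m + 1) : ℕ) : ZMod p) = 0 :=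
        Bmid (by omega) (by omega)
      linear_combination h1 - 2 * h2 + 4 * hb1 - hb2 + 2 * hbm1
  · have hc2 : ¬ 2 * (m + 1) < p := by omega
    rw [if_neg hc1] at hb1
    rw [if_neg hc2] at hb2
    have hbm : ((Nat.centralBinom m : ℕ) : ZMod p) = 0 :=
      Bmid (by omega) (by omega)
    have hbm1 : ((Nat.centralBinom (m + 1) : ℕ) : ZMod p) = 0 :=
      Bmid (by omega) (by omega)
    linear_combination h1 - 2 * h2 + 4 * hb1 - hb2 - 8 * hbm + 2 * hbm1

lemma sumC (hp2 : p ≠ 2) (hp3 : p ≠ 3) :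
    2 * ∑ k ∈ range p, (catalan k : ZMod p)
      = 3 * ((chi3 (p : ℤ) : ℤ) : ZMod p) - 1 := by
  have h1 : 2 * ∑ k ∈ range p, (catalan k : ZMod p)
      = 4 * (∑ k ∈ range p, ((Nat.centralBinom k : ℕ) : ZMod p))
        - ∑ k ∈ range p, ((Nat.centralBinom (k + 1) : ℕ) : ZMod p) := by
    rw [Finset.mul_sum, Finset.mul_sum, ← Finset.sum_sub_distrib]
    exact Finset.sum_congr rfl fun k _ => twoCatR k
  have hsucc := Finset.sum_range_succ (fun k => ((Nat.centralBinom k : ℕ) : ZMod p)) p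
  have hsucc' := Finset.sum_range_succ' (fun k => ((Nat.centralBinom k : ℕ) : ZMod p)) p
  have hBp : ((Nat.centralBinom (p + 0) : ℕ) : ZMod p) = 2 := by
    rw [Bshift (by exact hpf.out.pos), if_pos (by simpa using hpf.out.pos)]
    norm_num [Nat.centralBinom_zero]
  rw [Nat.add_zero] at hBp
  have hB0 : ((Nat.centralBinom 0 : ℕ) : ZMod p) = 1 := by
    norm_num [Nat.centralBinom_zero]
  have hS := sumB hp2 hp3
  linear_combination h1 - hsucc + hsucc' + 3 * hS - hBp + hB0

theorem main_modp (hp5 : 5 ≤ p) (d : ℕ) (hd : d ≤ p - 1) :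
    2 * ∑ k ∈ Finset.range p, (k : ℤ) * (catalan (k + d) : ℤ)
      ≡ ((d : ℤ) + 1) * (1 - chi3 (p : ℤ)) - 2 * chi3 (p : ℤ) * d
        - 2 * ∑ k ∈ Finset.range (d + 1), (k : ℤ) * (catalan (d - k) : ℤ) [ZMOD (p : ℤ)] := by
  have hp := hpf.out
  have hp2 : p ≠ 2 := by omega
  have hp3 : p ≠ 3 := by omega
  rw [← ZMod.intCast_eq_intCast_iff]
  push_cast
  -- abbreviations via equations
  have hps : ((p : ℕ) : ZMod p) = 0 := ZMod.natCast_self p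
  -- e1 : telescoped left sum
  have hA : ∑ k ∈ range p, (3 * (k : ZMod p) + 3 * (d : ZMod p) + 1) * (catalan (k + d) : ZMod p)
      = 3 * (∑ k ∈ range p, (k : ZMod p) * (catalan (k + d) : ZMod p))
        + (3 * (d : ZMod p) + 1) * ∑ k ∈ range p, (catalan (k + d) : ZMod p) := by
    rw [Finset.mul_sum, Finset.mul_sum, ← Finset.sum_add_distrib]
    exact Finset.sum_congr rfl fun k _ => by ring
  have e1 : 3 * (∑ k ∈ range p, (k : ZMod p) * (catalan (k + d) : ZMod p))
        + (3 * (d : ZMod p) + 1) * ∑ k ∈ range p, (catalan (k + d) : ZMod p)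
      = ((p : ZMod p) + (d : ZMod p) + 1) * (catalan (p + d) : ZMod p)
        - ((d : ZMod p) + 1) * (catalan d : ZMod p) := by
    rw [← hA]
    exact tele d p
  -- e2 : telescoped small sum
  have t2 := tele (R := ZMod p) 0 (d + 1)
  simp only [Nat.cast_zero, mul_zero, add_zero, Nat.add_zero, catalan_zero, Nat.cast_one,
    mul_one, zero_add] at t2
  have hA2 : ∑ k ∈ range (d + 1), (3 * (k : ZMod p) + 1) * (catalan k : ZMod p)
      = 3 * (∑ k ∈ range (d + 1), (k : ZMod p) * (catalan k : ZMod p))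
        + ∑ k ∈ range (d + 1), (catalan k : ZMod p) := by
    rw [Finset.mul_sum, ← Finset.sum_add_distrib]
    exact Finset.sum_congr rfl fun k _ => by ring
  have e2 : 3 * (∑ k ∈ range (d + 1), (k : ZMod p) * (catalan k : ZMod p))
        + ∑ k ∈ range (d + 1), (catalan k : ZMod p)
      = (((d : ℕ) + 1 : ℕ) : ZMod p) * (catalan (d + 1) : ZMod p)
        + (catalan (d + 1) : ZMod p) - 1 := by
    rw [← hA2, t2]
    ring
  -- e0 : reflection of the right sum
  have hrefl := Finset.sum_range_reflect
    (fun j => ((j : ZMod p)) * (catalan (d - j) : ZMod p)) (d + 1)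
  have e0' : ∑ j ∈ range (d + 1), ((d : ZMod p) - (j : ZMod p)) * (catalan j : ZMod p)
      = ∑ j ∈ range (d + 1), (j : ZMod p) * (catalan (d - j) : ZMod p) := by
    rw [← hrefl]
    apply Finset.sum_congr rfl
    intro j hj
    rw [Finset.mem_range] at hj
    have h1 : d + 1 - 1 - j = d - j := by omega
    have h2 : d - (d - j) = j := by omega
    rw [h1, h2, Nat.cast_sub (by omega : j ≤ d)]
  have e0 : ∑ j ∈ range (d + 1), (j : ZMod p) * (catalan (d - j) : ZMod p)
      = (d : ZMod p) * (∑ k ∈ range (d + 1), (catalan k : ZMod p))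
        - ∑ k ∈ range (d + 1), (k : ZMod p) * (catalan k : ZMod p) := by
    rw [← e0', Finset.mul_sum, ← Finset.sum_sub_distrib]
    exact Finset.sum_congr rfl fun k _ => by ring
  -- e3 : splitting the shifted full sum
  have h31 := Finset.sum_range_add (fun m => (catalan m : ZMod p)) d p
  have h32 := Finset.sum_range_add (fun m => (catalan m : ZMod p)) p d
  have h33 : ∑ k ∈ range p, (catalan (d + k) : ZMod p)
      = ∑ k ∈ range p, (catalan (k + d) : ZMod p) :=
    Finset.sum_congr rfl fun k _ => by rw [Nat.add_comm]
  have e3 : (∑ m ∈ range d, (catalan m : ZMod p)) + ∑ k ∈ range p, (catalan (k + d) : ZMod p)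
      = (∑ k ∈ range p, (catalan k : ZMod p)) + ∑ m ∈ range d, (catalan (p + m) : ZMod p) := by
    rw [← h33, ← h31, Nat.add_comm d p, h32]
  -- e4 : shifted catalans
  have e4 : 2 * (∑ m ∈ range d, (catalan (p + m) : ZMod p))
      = 4 * ∑ m ∈ range d, (catalan m : ZMod p) := by
    rw [Finset.mul_sum, Finset.mul_sum]
    apply Finset.sum_congr rfl
    intro m hm
    rw [Finset.mem_range] at hm
    exact cshift hp2 (by omega)
  -- e5 : full catalan sum
  have e5 := sumC hp2 hp3
  -- e6 : the boundary term
  have e6 : ((d : ZMod p) + 1) * (2 * (catalan (p + d) : ZMod p))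
      = ((d : ZMod p) + 1) * (4 * (catalan d : ZMod p)) := by
    by_cases hdp : d + 2 ≤ p
    · rw [cshift hp2 hdp]
    · have hd1 : ((d : ZMod p) + 1) = 0 := by
        have : ((d + 1 : ℕ) : ZMod p) = 0 := by
          rw [show d + 1 = p from by omega]
          exact ZMod.natCast_self p
        push_cast at this
        exact this
      rw [hd1, zero_mul, zero_mul]
  -- e7 : catalan recurrence at d
  have e7 : ((d : ZMod p) + 2) * (catalan (d + 1) : ZMod p)
      = (4 * (d : ZMod p) + 2) * (catalan d : ZMod p) := by
    have h := congrArg (fun x : ℕ => (x : ZMod p)) (cat_rec d)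
    push_cast at h
    exact h
  -- e8 : last term of the small sum
  have e8 := Finset.sum_range_succ (fun k => (catalan k : ZMod p)) d
  push_cast at e2
  have h12 : (12 : ZMod p) ≠ 0 := by
    rw [show (12 : ZMod p) = ((12 : ℕ) : ZMod p) from by norm_num]
    rw [Ne, ZMod.natCast_eq_zero_iff]
    intro hdvd
    have hle : p ≤ 12 := Nat.le_of_dvd (by norm_num) hdvd
    interval_cases p <;> revert hdvd <;> revert hp <;> decide
  apply mul_left_cancel₀ h12
  linear_combination (24 : ZMod p) * e0 + 8 * e1 + 8 * (catalan (p + d) : ZMod p) * hps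
    - 8 * e2 - (24 * (d : ZMod p) + 8) * e3 - (12 * (d : ZMod p) + 4) * e4
    - (12 * (d : ZMod p) + 4) * e5 + 4 * e6 - 8 * e7 + (24 * (d : ZMod p) + 8) * e8


end ModP

lemma catalan_four : catalan 4 = 14 := by
  rw [show 4 = 3 + 1 from rfl, catalan_succ]
  simp [Fin.sum_univ_succ, catalan_zero, catalan_one, catalan_two, catalan_three]

theorem sum_mul_catalan_shift (p : ℕ) (hp : p.Prime) (d : ℕ) (hd : d ≤ p - 1) :
    2 * ∑ k ∈ Finset.range p, (k : ℤ) * (catalan (k + d) : ℤ)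
      ≡ ((d : ℤ) + 1) * (1 - chi3 (p : ℤ)) - 2 * chi3 (p : ℤ) * d
        - 2 * ∑ k ∈ Finset.range (d + 1), (k : ℤ) * (catalan (d - k) : ℤ) [ZMOD (p : ℤ)] := by
  haveI : Fact p.Prime := ⟨hp⟩
  by_cases h5 : 5 ≤ p
  · exact main_modp h5 d hd
  · have hp23 : p = 2 ∨ p = 3 := by
      have h2 := hp.two_le
      interval_cases p
      · exact Or.inl rfl
      · exact Or.inr rfl
      · exact absurd hp (by norm_num)
    rcases hp23 with rfl | rfl
    · interval_cases d <;>
        · norm_num [Finset.sum_range_succ, catalan_zero, catalan_one,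
            catalan_two, catalan_three, catalan_four, chi3, Int.ModEq]
    · interval_cases d <;>
        · norm_num [Finset.sum_range_succ, catalan_zero, catalan_one,
            catalan_two, catalan_three, catalan_four, chi3, Int.ModEq]
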